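/- Let p > 0, let a, c ∈ ℝᵐ with c ≠ 0, and let F_V, F_h ∈ ℝ. Set L = ⟨a, c⟩, Δ = L² − (p⁻¹ + ‖a‖²)‖c‖² (note Δ < 0 by the Cauchy–Schwarz inequality since c ≠ 0 and p⁻¹ > 0), λ₁ = Δ⁻¹(L·F_h − ‖c‖²F_V), and λ₂ = Δ⁻¹((p⁻¹ + ‖a‖²)F_h − L·F_V). If λ₁ ≥ 0 and λ₂ ≥ 0, then the pair (u*, δ*) with u* = −λ₁a + λ₂c and δ* = p⁻¹λ₁ is the unique minimizer of the strictly convex function (u, δ) ↦ ½(‖u‖² + pδ²) over the set {(u, δ) ∈ ℝᵐ × ℝ : ⟨a, u⟩ ≤ −F_V + δ and ⟨c, u⟩ ≥ −F_h}. -/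

import Mathlib

open scoped RealInnerProductSpace

/-- closed-form KKT solution of the relaxed CLF-CBF QP when both
constraints are active: with `L = ⟪a,c⟫`, `Δ = L² - (p⁻¹ + ‖a‖²)‖c‖² < 0`,
multipliers `λ₁ = Δ⁻¹(L F_h - ‖c‖² F_V) ≥ 0`, `λ₂ = Δ⁻¹((p⁻¹ + ‖a‖²)F_h - L F_V) ≥ 0`,
the pair `u* = -λ₁ a + λ₂ c`, `δ* = p⁻¹ λ₁` is the unique minimizer of
`½(‖u‖² + pδ²)` over `{(u,δ) : ⟪a,u⟫ ≤ -F_V + δ ∧ ⟪c,u⟫ ≥ -F_h}`. -/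
theorem stmt_15 {m : ℕ}
    (p : ℝ) (hp : 0 < p)
    (a c : EuclideanSpace ℝ (Fin m)) (hc : c ≠ 0)
    (FV Fh : ℝ)
    (L Δ l1 l2 : ℝ)
    (hL : L = ⟪a, c⟫)
    (hΔ : Δ = L ^ 2 - (p⁻¹ + ‖a‖ ^ 2) * ‖c‖ ^ 2)
    (hl1 : l1 = Δ⁻¹ * (L * Fh - ‖c‖ ^ 2 * FV))
    (hl2 : l2 = Δ⁻¹ * ((p⁻¹ + ‖a‖ ^ 2) * Fh - L * FV))
    (hl1nn : 0 ≤ l1) (hl2nn : 0 ≤ l2) :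
    let uStar : EuclideanSpace ℝ (Fin m) := -(l1 • a) + l2 • c
    let δStar : ℝ := p⁻¹ * l1
    (⟪a, uStar⟫ ≤ -FV + δStar ∧ ⟪c, uStar⟫ ≥ -Fh) ∧
    ∀ (u : EuclideanSpace ℝ (Fin m)) (δ : ℝ),
      ⟪a, u⟫ ≤ -FV + δ → ⟪c, u⟫ ≥ -Fh →
      (1 : ℝ) / 2 * (‖uStar‖ ^ 2 + p * δStar ^ 2) ≤
        (1 : ℝ) / 2 * (‖u‖ ^ 2 + p * δ ^ 2) ∧
      ((u, δ) ≠ (uStar, δStar) →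
        (1 : ℝ) / 2 * (‖uStar‖ ^ 2 + p * δStar ^ 2) <
          (1 : ℝ) / 2 * (‖u‖ ^ 2 + p * δ ^ 2)) := by
  intro uStar δStar
  have hpne : p ≠ 0 := ne_of_gt hp
  have hpinv : 0 < p⁻¹ := inv_pos.mpr hp
  have hcn : 0 < ‖c‖ ^ 2 := pow_pos (norm_pos_iff.mpr hc) 2
  have hCS : |⟪a, c⟫| ≤ ‖a‖ * ‖c‖ := abs_real_inner_le_norm a c
  have hΔneg : Δ < 0 := by
    have h1 : L ^ 2 ≤ ‖a‖ ^ 2 * ‖c‖ ^ 2 := by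
      rw [hL]
      nlinarith [abs_nonneg ⟪a, c⟫, sq_abs ⟪a, c⟫]
    nlinarith
  have hΔne : Δ ≠ 0 := ne_of_lt hΔneg
  have h1 : l1 * Δ = L * Fh - ‖c‖ ^ 2 * FV := by
    rw [hl1]; field_simp
  have h2 : l2 * Δ = (p⁻¹ + ‖a‖ ^ 2) * Fh - L * FV := by
    rw [hl2]; field_simp
  -- inner products with uStar
  have hAu : ⟪a, uStar⟫ = -(l1 * ‖a‖ ^ 2) + l2 * L := by
    simp only [uStar, inner_add_right, inner_neg_right, real_inner_smul_right,
      real_inner_self_eq_norm_sq, hL]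
  have hCu : ⟪c, uStar⟫ = -(l1 * L) + l2 * ‖c‖ ^ 2 := by
    simp only [uStar, inner_add_right, inner_neg_right, real_inner_smul_right,
      real_inner_self_eq_norm_sq, hL, real_inner_comm c a]
  have hAeq : ⟪a, uStar⟫ = -FV + δStar := by
    rw [hAu]
    show -(l1 * ‖a‖ ^ 2) + l2 * L = -FV + p⁻¹ * l1
    have key : (-(l1 * ‖a‖ ^ 2) + l2 * L) * Δ = (-FV + p⁻¹ * l1) * Δ := by
      linear_combination (-(‖a‖ ^ 2) - p⁻¹) * h1 + L * h2 + FV * hΔ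
    exact mul_right_cancel₀ hΔne key
  have hCeq : ⟪c, uStar⟫ = -Fh := by
    rw [hCu]
    have key : (-(l1 * L) + l2 * ‖c‖ ^ 2) * Δ = (-Fh) * Δ := by
      linear_combination (-L) * h1 + ‖c‖ ^ 2 * h2 + Fh * hΔ
    exact mul_right_cancel₀ hΔne key
  refine ⟨⟨le_of_eq hAeq, ge_of_eq hCeq⟩, ?_⟩
  intro u δ hu1 hu2
  have hexp : ‖u‖ ^ 2 = ‖uStar‖ ^ 2 + 2 * ⟪uStar, u - uStar⟫ + ‖u - uStar‖ ^ 2 := by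
    have := norm_add_sq_real uStar (u - uStar)
    rwa [add_sub_cancel] at this
  have hinner : ⟪uStar, u - uStar⟫
      = -(l1 * (⟪a, u⟫ - ⟪a, uStar⟫)) + l2 * (⟪c, u⟫ - ⟪c, uStar⟫) := by
    simp only [uStar, inner_add_left, inner_neg_left, real_inner_smul_left, inner_sub_right]
    ring
  have hkey : ⟪uStar, u - uStar⟫ ≥ -(l1 * (δ - δStar)) := by
    rw [hinner, hAeq, hCeq]
    have ha1 : ⟪a, u⟫ - (-FV + δStar) ≤ δ - δStar := by linarith
    have hb1 : 0 ≤ ⟪c, u⟫ - -Fh := by linarith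
    nlinarith [mul_nonneg hl2nn hb1, mul_le_mul_of_nonneg_left ha1 hl1nn]
  have hpδ : p * δStar = l1 := by
    show p * (p⁻¹ * l1) = l1
    field_simp
  have hδexp : p * δ ^ 2 = p * δStar ^ 2 + 2 * (l1 * (δ - δStar)) + p * (δ - δStar) ^ 2 := by
    rw [← hpδ]; ring
  have hsq : 0 ≤ ‖u - uStar‖ ^ 2 := sq_nonneg _
  have hsq2 : 0 ≤ p * (δ - δStar) ^ 2 := by positivity
  constructor
  · linarith
  · intro hne
    have : u ≠ uStar ∨ δ ≠ δStar := by
      by_contra h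
      push_neg at h
      exact hne (Prod.ext h.1 h.2)
    rcases this with h | h
    · have hpos : 0 < ‖u - uStar‖ ^ 2 :=
        pow_pos (norm_pos_iff.mpr (sub_ne_zero.mpr h)) 2
      linarith
    · have hpos : 0 < p * (δ - δStar) ^ 2 :=
        by have : δ - δStar ≠ 0 := sub_ne_zero.mpr h; positivity
      linarith
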